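/- arXiv:2305.02114 — 7 statements merged into one kernel-verified Lean document; each statement's English description precedes it below -/
import Mathlib

section
/- For 0 < κ ≤ 1, the function h_κ(x) = ln(κ·Γ(x))/(x-1) is strictly increasing on (1,∞). -/
open Real

lemma strictConvexOn_log_Gamma_aux : StrictConvexOn ℝ (Set.Ioi (0:ℝ)) (log ∘ Real.Gamma) := by
  have hshift : ConvexOn ℝ (Set.Ioi (0:ℝ)) (fun x => Real.log (Real.Gamma (x + 1))) := by
    have := (Real.convexOn_log_Gamma).translate_left 1
    refine ConvexOn.subset (this.congr ?_) ?_ (convex_Ioi 0)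
    · intro x hx; simp [Function.comp, add_comm]
    · intro x hx
      simp only [Set.mem_preimage, Set.mem_Ioi] at *
      linarith
  have hneglog : StrictConvexOn ℝ (Set.Ioi (0:ℝ)) (fun x => -Real.log x) := by
    exact strictConcaveOn_log_Ioi.neg
  have hsum := hshift.add_strictConvexOn hneglog
  refine hsum.congr fun x hx => ?_
  have hx0 : (0:ℝ) < x := hx
  have hΓ : 0 < Real.Gamma x := Real.Gamma_pos_of_pos hx0
  simp only [Pi.add_apply, Function.comp_apply]
  rw [Real.Gamma_add_one hx0.ne', Real.log_mul hx0.ne' hΓ.ne']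
  ring

theorem h_strictMono_of_kappa_le_one (κ : ℝ) (hκ0 : 0 < κ) (hκ1 : κ ≤ 1) :
    StrictMonoOn (fun x => Real.log (κ * Real.Gamma x) / (x - 1)) (Set.Ioi 1) := by
  intro x hx y hy hxy
  have hx1 : (1:ℝ) < x := hx
  have hy1 : (1:ℝ) < y := hy
  have hΓx : 0 < Real.Gamma x := Real.Gamma_pos_of_pos (by linarith)
  have hΓy : 0 < Real.Gamma y := Real.Gamma_pos_of_pos (by linarith)
  have hlogκ : Real.log κ ≤ 0 := Real.log_nonpos hκ0.le hκ1
  -- secant slope of log ∘ Γ from the point 1 is strictly monotone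
  have hsec := strictConvexOn_log_Gamma_aux.secant_strict_mono
    (a := 1) (x := x) (y := y) (by norm_num) (by simp; linarith) (by simp; linarith)
    (by linarith) (by linarith) hxy
  simp only [Function.comp, Real.Gamma_one, Real.log_one, sub_zero] at hsec
  have hκterm : Real.log κ / (x - 1) ≤ Real.log κ / (y - 1) := by
    rw [div_le_div_iff₀ (by linarith) (by linarith)]
    nlinarith
  have hxeq : Real.log (κ * Real.Gamma x) / (x - 1)
      = Real.log (Real.Gamma x) / (x - 1) + Real.log κ / (x - 1) := by
    rw [Real.log_mul hκ0.ne' hΓx.ne', add_div]; ring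
  have hyeq : Real.log (κ * Real.Gamma y) / (y - 1)
      = Real.log (Real.Gamma y) / (y - 1) + Real.log κ / (y - 1) := by
    rw [Real.log_mul hκ0.ne' hΓy.ne', add_div]; ring
  simp only [hxeq, hyeq]
  linarith
end

section
/- For κ = 1, the infimum over x ∈ (1,∞) of h_1(x) = ln(Γ(x))/(x-1) equals -γ, and this infimum is not attained (it equals the limit as x → 1⁺). -/
open Real Filter Set

local notation "γ" => Real.eulerMascheroniConstant

private lemma f_hasDerivAt_one :
    HasDerivAt (fun x : ℝ => Real.log (Real.Gamma x)) (-γ) 1 := by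
  have h := (Real.hasDerivAt_Gamma_one).log (by rw [Real.Gamma_one]; exact one_ne_zero)
  simpa [Real.Gamma_one] using h

private lemma slope_eq (x : ℝ) (hx : x ≠ 1) :
    slope (fun x : ℝ => Real.log (Real.Gamma x)) 1 x
      = Real.log (Real.Gamma x) / (x - 1) := by
  rw [slope_def_field]
  simp [Real.Gamma_one]

private lemma tendsto_part :
    Tendsto (fun x => Real.log (Real.Gamma x) / (x - 1))
      (nhdsWithin 1 (Set.Ioi 1)) (nhds (-γ)) := by
  have h := hasDerivAt_iff_tendsto_slope.mp f_hasDerivAt_one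
  have h2 : Tendsto (slope (fun x : ℝ => Real.log (Real.Gamma x)) 1)
      (nhdsWithin 1 (Set.Ioi 1)) (nhds (-γ)) :=
    h.mono_left (nhdsWithin_mono _ (fun x hx => ne_of_gt hx))
  refine h2.congr' ?_
  filter_upwards [self_mem_nhdsWithin] with x hx
  exact slope_eq x (ne_of_gt hx)

private lemma lower_bound {x : ℝ} (hx : 1 < x) :
    -γ ≤ Real.log (Real.Gamma x) / (x - 1) := by
  rw [← slope_eq x (ne_of_gt hx)]
  exact Real.convexOn_log_Gamma.le_slope_of_hasDerivAt (by norm_num : (1:ℝ) ∈ Ioi 0)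
    (mem_Ioi.mpr (by linarith)) hx f_hasDerivAt_one

private lemma deriv_rec {x : ℝ} (hx : 0 < x) :
    deriv (fun x : ℝ => Real.log (Real.Gamma x)) (x + 1)
      = deriv (fun x : ℝ => Real.log (Real.Gamma x)) x + 1 / x := by
  set f := fun x : ℝ => Real.log (Real.Gamma x) with hf
  have h_rec : ∀ y : ℝ, 0 < y → f (y + 1) = f y + Real.log y := fun y hy => by
    simp only [hf, Real.Gamma_add_one hy.ne',
      Real.log_mul hy.ne' (Real.Gamma_pos_of_pos hy).ne', add_comm]
  have hder : ∀ {y : ℝ}, 0 < y → DifferentiableAt ℝ f y := by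
    intro y hy
    refine ((Real.differentiableAt_Gamma ?_).log (Real.Gamma_ne_zero ?_)) <;>
      exact fun m => ((neg_nonpos.mpr m.cast_nonneg).trans_lt hy).ne'
  rw [← deriv_comp_add_const, one_div, ← Real.deriv_log,
    ← deriv_add (hder hx) (Real.differentiableAt_log hx.ne')]
  apply Filter.EventuallyEq.deriv_eq
  filter_upwards [eventually_gt_nhds hx] using h_rec

private lemma not_attained_part :
    ∀ x ∈ Set.Ioi (1:ℝ), Real.log (Real.Gamma x) / (x - 1) ≠ -γ := by
  intro x0 hx0 hcon
  set f := fun x : ℝ => Real.log (Real.Gamma x) with hf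
  have hc := Real.convexOn_log_Gamma
  have hx0' : (1:ℝ) < x0 := hx0
  -- slope is constant -γ on (1, x0]
  have hconst : ∀ x ∈ Set.Ioc (1:ℝ) x0, f x = -γ * (x - 1) := by
    intro x hx
    have h1 : -γ ≤ f x / (x - 1) := lower_bound hx.1
    have h2 : slope f 1 x ≤ slope f 1 x0 := by
      refine hc.slope_mono (by norm_num : (1:ℝ) ∈ Ioi 0) ?_ ?_ hx.2
      · exact ⟨mem_Ioi.mpr (by linarith [hx.1]), ne_of_gt hx.1⟩
      · exact ⟨mem_Ioi.mpr (by linarith), ne_of_gt hx0'⟩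
    rw [slope_eq x (ne_of_gt hx.1), slope_eq x0 (ne_of_gt hx0'), hcon] at h2
    have heq : f x / (x - 1) = -γ := le_antisymm h2 h1
    have hxne : x - 1 ≠ 0 := sub_ne_zero.mpr (ne_of_gt hx.1)
    field_simp at heq
    linarith [heq]
  -- hence deriv f = -γ on (1, x0)
  have hderiv_const : ∀ x ∈ Set.Ioo (1:ℝ) x0, deriv f x = -γ := by
    intro x hx
    have hev : f =ᶠ[nhds x] (fun y => -γ * (y - 1)) := by
      filter_upwards [Ioo_mem_nhds hx.1 hx.2] with y hy
      exact hconst y ⟨hy.1, le_of_lt hy.2⟩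
    rw [hev.deriv_eq]
    simpa using (((hasDerivAt_id x).sub_const 1).const_mul (-γ)).deriv
  -- pick two points a < b in (1, x0); derive contradiction via recurrence
  set a := 1 + (x0 - 1) / 3 with ha
  set b := 1 + 2 * ((x0 - 1) / 3) with hb
  have hax : a ∈ Set.Ioo (1:ℝ) x0 := ⟨by simp [ha]; linarith, by simp [ha]; linarith⟩
  have hbx : b ∈ Set.Ioo (1:ℝ) x0 := ⟨by simp [hb]; linarith, by simp [hb]; linarith⟩
  have hab : a < b := by simp [ha, hb]; linarith
  have hda : deriv f (a + 1) = -γ + 1 / a := by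
    rw [deriv_rec (by linarith [hax.1] : (0:ℝ) < a), hderiv_const a hax]
  have hdb : deriv f (b + 1) = -γ + 1 / b := by
    rw [deriv_rec (by linarith [hbx.1] : (0:ℝ) < b), hderiv_const b hbx]
  have hder : ∀ {y : ℝ}, 0 < y → DifferentiableAt ℝ f y := by
    intro y hy
    refine ((Real.differentiableAt_Gamma ?_).log (Real.Gamma_ne_zero ?_)) <;>
      exact fun m => ((neg_nonpos.mpr m.cast_nonneg).trans_lt hy).ne'
  have hmono : deriv f (a + 1) ≤ deriv f (b + 1) := by
    have h1 := hc.deriv_le_slope (mem_Ioi.mpr (by linarith [hax.1] : (0:ℝ) < a + 1))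
      (mem_Ioi.mpr (by linarith [hbx.1] : (0:ℝ) < b + 1)) (by linarith)
      (hder (by linarith [hax.1]))
    have h2 := hc.slope_le_deriv (mem_Ioi.mpr (by linarith [hax.1] : (0:ℝ) < a + 1))
      (mem_Ioi.mpr (by linarith [hbx.1] : (0:ℝ) < b + 1)) (by linarith)
      (hder (by linarith [hbx.1]))
    rw [show (Real.log ∘ Real.Gamma) = f from rfl] at h1 h2
    linarith
  rw [hda, hdb] at hmono
  have h1a : 0 < a := by linarith [hax.1]
  have h1b : 0 < b := by linarith [hbx.1]
  have : 1 / b < 1 / a := one_div_lt_one_div_of_lt h1a hab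
  linarith

theorem h_one_inf_eq_neg_gamma :
    IsGLB ((fun x => Real.log (Real.Gamma x) / (x - 1)) '' Set.Ioi 1)
      (-Real.eulerMascheroniConstant) ∧
    (-Real.eulerMascheroniConstant) ∉
      ((fun x => Real.log (Real.Gamma x) / (x - 1)) '' Set.Ioi 1) ∧
    Tendsto (fun x => Real.log (Real.Gamma x) / (x - 1))
      (nhdsWithin 1 (Set.Ioi 1)) (nhds (-Real.eulerMascheroniConstant)) := by
  refine ⟨⟨?_, ?_⟩, ?_, tendsto_part⟩
  · rintro y ⟨x, hx, rfl⟩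
    exact lower_bound hx
  · intro b hb
    refine ge_of_tendsto tendsto_part ?_
    filter_upwards [self_mem_nhdsWithin] with x hx
    exact hb ⟨x, hx, rfl⟩
  · rintro ⟨x, hx, hval⟩
    exact not_attained_part x hx hval
end

section
/- For κ > 1, with x₀(κ) the unique zero in (1,∞) of φ_κ(x) = (x-1)ψ(x) - ln(κΓ(x)), the function h_κ(x) = ln(κΓ(x))/(x-1) is strictly decreasing on (1, x₀(κ)) and strictly increasing on (x₀(κ), ∞); hence min_{x>1} h_κ(x) = h_κ(x₀(κ)). -/
open Real

noncomputable def digamma (x : ℝ) : ℝ := deriv (fun y => Real.log (Real.Gamma y)) x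

lemma hasDerivAt_logGamma {x : ℝ} (hx : 0 < x) :
    HasDerivAt (fun y => Real.log (Real.Gamma y)) (digamma x) x := by
  have hd : DifferentiableAt ℝ (fun y => Real.log (Real.Gamma y)) x := by
    refine (Real.differentiableAt_Gamma fun m => ?_).log (Real.Gamma_pos_of_pos hx).ne'
    have : (0:ℝ) ≤ m := m.cast_nonneg
    linarith
  exact hd.hasDerivAt

lemma digamma_rec {x : ℝ} (hx : 0 < x) : digamma (x + 1) = digamma x + 1 / x := by
  have h1 : HasDerivAt (fun y => Real.log (Real.Gamma (y + 1))) (digamma (x + 1)) x := by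
    have := (hasDerivAt_logGamma (by linarith : (0:ℝ) < x + 1)).comp x
      ((hasDerivAt_id x).add_const 1)
    rw [mul_one] at this
    exact this
  have h2 : HasDerivAt (fun y => Real.log (Real.Gamma y) + Real.log y)
      (digamma x + 1 / x) x := by
    have := (hasDerivAt_logGamma hx).add (Real.hasDerivAt_log hx.ne')
    rw [one_div]; exact this
  have heq : (fun y => Real.log (Real.Gamma (y + 1)))
      =ᶠ[nhds x] (fun y => Real.log (Real.Gamma y) + Real.log y) := by
    filter_upwards [eventually_gt_nhds hx] with y hy
    rw [Real.Gamma_add_one hy.ne', Real.log_mul hy.ne' (Real.Gamma_pos_of_pos hy).ne']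
    ring
  have h1' := h1.congr_of_eventuallyEq heq.symm
  exact h1'.unique h2

lemma digamma_mono {a b : ℝ} (ha : 0 < a) (hab : a < b) : digamma a ≤ digamma b := by
  have hc := Real.convexOn_log_Gamma
  have hc' : ConvexOn ℝ (Set.Ioi 0) (fun y => Real.log (Real.Gamma y)) := hc
  have hb : 0 < b := ha.trans hab
  have := hc'.monotoneOn_deriv (fun x hx => (hasDerivAt_logGamma hx).differentiableAt)
    (Set.mem_Ioi.mpr ha) (Set.mem_Ioi.mpr hb) hab.le
  exact this

lemma digamma_strictMono {a b : ℝ} (ha : 0 < a) (hab : a < b) : digamma a < digamma b := by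
  rcases lt_or_ge (digamma a) (digamma b) with h | h
  · exact h
  exfalso
  have heq : digamma a = digamma b := le_antisymm (digamma_mono ha hab) h
  have h1 : digamma (a + 1) = digamma a + 1 / a := digamma_rec ha
  have h2 : digamma (b + 1) = digamma b + 1 / b := digamma_rec (ha.trans hab)
  have h3 : digamma (a + 1) ≤ digamma (b + 1) :=
    digamma_mono (by linarith) (by linarith)
  have h4 : 1 / b < 1 / a := one_div_lt_one_div_of_lt ha hab
  rw [h1, h2, heq] at h3
  linarith

/-- The auxiliary function φ(x) = (x-1)ψ(x) - log Γ(x) is strictly increasing on (1,∞). -/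
lemma phi_strictMono {a b : ℝ} (ha : 1 < a) (hab : a < b) :
    (a - 1) * digamma a - Real.log (Real.Gamma a) <
    (b - 1) * digamma b - Real.log (Real.Gamma b) := by
  have ha0 : (0:ℝ) < a := by linarith
  have hb0 : (0:ℝ) < b := by linarith
  obtain ⟨c, hc, hceq⟩ := exists_hasDerivAt_eq_slope (fun y => Real.log (Real.Gamma y))
    digamma hab
    (fun x hx => (hasDerivAt_logGamma (lt_of_lt_of_le ha0 hx.1)).continuousAt.continuousWithinAt)
    (fun x hx => hasDerivAt_logGamma (ha0.trans hx.1))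
  have hcd : digamma c ≤ digamma b := (digamma_strictMono (ha0.trans hc.1) hc.2).le
  have hab' : digamma a < digamma b := digamma_strictMono ha0 hab
  have hslope : Real.log (Real.Gamma b) - Real.log (Real.Gamma a) = digamma c * (b - a) := by
    rw [hceq, div_mul_cancel₀ _ (by linarith : b - a ≠ 0)]
  nlinarith [hc.1, hc.2]

lemma hasDerivAt_h {κ x : ℝ} (hκ : 0 < κ) (hx : 1 < x) :
    HasDerivAt (fun y => Real.log (κ * Real.Gamma y) / (y - 1))
      (((x - 1) * digamma x - Real.log (κ * Real.Gamma x)) / (x - 1) ^ 2) x := by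
  have hx0 : (0:ℝ) < x := by linarith
  have hnum : HasDerivAt (fun y => Real.log (κ * Real.Gamma y)) (digamma x) x := by
    have h1 : HasDerivAt (fun y => Real.log κ + Real.log (Real.Gamma y)) (digamma x) x := by
      simpa using (hasDerivAt_logGamma hx0).const_add (Real.log κ)
    refine h1.congr_of_eventuallyEq ?_
    filter_upwards [eventually_gt_nhds hx0] with y hy
    rw [Real.log_mul hκ.ne' (Real.Gamma_pos_of_pos hy).ne']
  have hden : HasDerivAt (fun y : ℝ => y - 1) 1 x := by
    simpa using (hasDerivAt_id x).sub_const 1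
  have := hnum.div hden (by linarith : x - 1 ≠ 0)
  rw [show ((x - 1) * digamma x - Real.log (κ * Real.Gamma x)) / (x - 1) ^ 2
    = (digamma x * (x - 1) - Real.log (κ * Real.Gamma x) * 1) / (x - 1) ^ 2 by ring]
  exact this

theorem h_min_at_x0 (κ : ℝ) (hκ : 1 < κ) (x₀ : ℝ) (hx₀ : 1 < x₀)
    (hzero : (x₀ - 1) * digamma x₀ - Real.log (κ * Real.Gamma x₀) = 0) :
    StrictAntiOn (fun x => Real.log (κ * Real.Gamma x) / (x - 1)) (Set.Ioc 1 x₀) ∧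
    StrictMonoOn (fun x => Real.log (κ * Real.Gamma x) / (x - 1)) (Set.Ici x₀) ∧
    (∀ x : ℝ, 1 < x →
      Real.log (κ * Real.Gamma x₀) / (x₀ - 1) ≤ Real.log (κ * Real.Gamma x) / (x - 1)) := by
  have hκ0 : (0:ℝ) < κ := by linarith
  set Φ : ℝ → ℝ := fun x => (x - 1) * digamma x - Real.log (κ * Real.Gamma x) with hΦ
  have hΦmono : ∀ a b : ℝ, 1 < a → a < b → Φ a < Φ b := by
    intro a b ha hab
    have ha0 : (0:ℝ) < a := by linarith
    have hb0 : (0:ℝ) < b := by linarith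
    have h := phi_strictMono ha hab
    have hla : Real.log (κ * Real.Gamma a) = Real.log κ + Real.log (Real.Gamma a) :=
      Real.log_mul hκ0.ne' (Real.Gamma_pos_of_pos ha0).ne'
    have hlb : Real.log (κ * Real.Gamma b) = Real.log κ + Real.log (Real.Gamma b) :=
      Real.log_mul hκ0.ne' (Real.Gamma_pos_of_pos hb0).ne'
    simp only [hΦ, hla, hlb]
    linarith
  have hcont : ∀ x : ℝ, 1 < x →
      ContinuousAt (fun x => Real.log (κ * Real.Gamma x) / (x - 1)) x :=
    fun x hx => (hasDerivAt_h hκ0 hx).continuousAt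
  have hderiv : ∀ x : ℝ, 1 < x →
      deriv (fun x => Real.log (κ * Real.Gamma x) / (x - 1)) x = Φ x / (x - 1) ^ 2 :=
    fun x hx => (hasDerivAt_h hκ0 hx).deriv
  have hanti : StrictAntiOn (fun x => Real.log (κ * Real.Gamma x) / (x - 1)) (Set.Ioc 1 x₀) := by
    refine strictAntiOn_of_deriv_neg (convex_Ioc 1 x₀)
      (fun x hx => (hcont x hx.1).continuousWithinAt) ?_
    intro x hx
    rw [interior_Ioc] at hx
    rw [hderiv x hx.1]
    have hneg : Φ x < 0 := by
      have := hΦmono x x₀ hx.1 hx.2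
      have hz0 : Φ x₀ = 0 := hzero
      linarith
    apply div_neg_of_neg_of_pos hneg
    have : (0:ℝ) < x - 1 := by linarith [hx.1]
    positivity
  have hmono : StrictMonoOn (fun x => Real.log (κ * Real.Gamma x) / (x - 1)) (Set.Ici x₀) := by
    refine strictMonoOn_of_deriv_pos (convex_Ici x₀)
      (fun x hx => (hcont x (lt_of_lt_of_le hx₀ hx)).continuousWithinAt) ?_
    intro x hx
    rw [interior_Ici] at hx
    have hx1 : 1 < x := hx₀.trans hx
    rw [hderiv x hx1]
    have hpos : 0 < Φ x := by
      have := hΦmono x₀ x hx₀ hx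
      have hz0 : Φ x₀ = 0 := hzero
      linarith
    apply div_pos hpos
    have : (0:ℝ) < x - 1 := by linarith
    positivity
  refine ⟨hanti, hmono, fun x hx => ?_⟩
  rcases lt_trichotomy x x₀ with h | h | h
  · exact (hanti ⟨hx, h.le⟩ ⟨hx₀, le_refl _⟩ h).le
  · rw [h]
  · exact (hmono (Set.mem_Ici.mpr (le_refl _)) h.le h).le
end

section
/- For κ > 1, define g_κ(α) = 1 - exp(-(κ·Γ(1/α + 1))^α) for α > 0. Then g_κ attains its minimum over (0,∞) at α₀(κ) = 1/(x₀(κ) - 1), where x₀(κ) is the unique zero in (1,∞) of φ_κ(x) = (x-1)ψ(x) - ln(κΓ(x)). -/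
open Real

lemma logGamma_diff (x : ℝ) (hx : 0 < x) :
    DifferentiableAt ℝ (Real.log ∘ Real.Gamma) x := by
  have hΓ : DifferentiableAt ℝ Real.Gamma x :=
    Real.differentiableAt_Gamma (fun m => ne_of_gt (lt_of_le_of_lt (neg_nonpos.2 (Nat.cast_nonneg m)) hx))
  exact hΓ.log (Real.Gamma_pos_of_pos hx).ne'

/-- Tangent line inequality for `log ∘ Γ`. -/
lemma logGamma_tangent {x y : ℝ} (hx : 0 < x) (hy : 0 < y) :
    Real.log (Real.Gamma x) + digamma x * (y - x) ≤ Real.log (Real.Gamma y) := by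
  have hconv := Real.convexOn_log_Gamma
  have hdig : digamma x = deriv (Real.log ∘ Real.Gamma) x := rfl
  rcases lt_trichotomy x y with h | h | h
  · have := hconv.deriv_le_slope (Set.mem_Ioi.2 hx) (Set.mem_Ioi.2 hy) h
      (logGamma_diff x hx)
    rw [slope_def_field] at this
    rw [hdig]
    have hne : y - x ≠ 0 := sub_ne_zero.2 h.ne'
    have := mul_le_mul_of_nonneg_right this (le_of_lt (sub_pos.2 h))
    calc Real.log (Real.Gamma x) + deriv (Real.log ∘ Real.Gamma) x * (y - x)
        ≤ Real.log (Real.Gamma x)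
          + ((Real.log ∘ Real.Gamma) y - (Real.log ∘ Real.Gamma) x) / (y - x) * (y - x) := by
          linarith
      _ = Real.log (Real.Gamma y) := by
          field_simp
          simp only [Function.comp_apply]; ring
  · subst h; simp
  · have := hconv.slope_le_deriv (Set.mem_Ioi.2 hy) (Set.mem_Ioi.2 hx) h
      (logGamma_diff x hx)
    rw [slope_def_field] at this
    rw [hdig]
    have hpos : 0 < x - y := sub_pos.2 h
    have := mul_le_mul_of_nonneg_right this hpos.le
    calc Real.log (Real.Gamma x) + deriv (Real.log ∘ Real.Gamma) x * (y - x)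
        = Real.log (Real.Gamma x) - deriv (Real.log ∘ Real.Gamma) x * (x - y) := by ring
      _ ≤ Real.log (Real.Gamma x)
          - ((Real.log ∘ Real.Gamma) x - (Real.log ∘ Real.Gamma) y) / (x - y) * (x - y) := by
          linarith
      _ = Real.log (Real.Gamma y) := by
          field_simp
          simp only [Function.comp_apply]; ring

theorem g_min_at_alpha0 (κ : ℝ) (hκ : 1 < κ) (x₀ : ℝ) (hx₀ : 1 < x₀)
    (hzero : (x₀ - 1) * digamma x₀ - Real.log (κ * Real.Gamma x₀) = 0) :
    ∀ α : ℝ, 0 < α →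
      1 - Real.exp (-(κ * Real.Gamma (1 / (1 / (x₀ - 1)) + 1)) ^ (1 / (x₀ - 1)))
        ≤ 1 - Real.exp (-(κ * Real.Gamma (1 / α + 1)) ^ α) := by
  intro α hα
  have hκ0 : (0:ℝ) < κ := by linarith
  have hx₀1 : 0 < x₀ - 1 := by linarith
  have hx₀0 : 0 < x₀ := by linarith
  set x : ℝ := 1 / α + 1 with hxdef
  have hx1 : 0 < x - 1 := by
    have : (0:ℝ) < 1 / α := by positivity
    simp [hxdef]; linarith
  have hx0 : 0 < x := by linarith
  have hxe : 1 / (1 / (x₀ - 1)) + 1 = x₀ := by field_simp; ring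
  have hαx : α * (x - 1) = 1 := by
    have : x - 1 = 1 / α := by simp [hxdef]
    rw [this]; field_simp
  -- positivity of bases
  have hB0 : 0 < κ * Real.Gamma x₀ := mul_pos hκ0 (Real.Gamma_pos_of_pos hx₀0)
  have hB1 : 0 < κ * Real.Gamma x := mul_pos hκ0 (Real.Gamma_pos_of_pos hx0)
  -- log of products
  have hlog0 : Real.log (κ * Real.Gamma x₀) = Real.log κ + Real.log (Real.Gamma x₀) :=
    Real.log_mul hκ0.ne' (Real.Gamma_pos_of_pos hx₀0).ne'
  have hlog1 : Real.log (κ * Real.Gamma x) = Real.log κ + Real.log (Real.Gamma x) :=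
    Real.log_mul hκ0.ne' (Real.Gamma_pos_of_pos hx0).ne'
  -- tangent line inequality
  have htan := logGamma_tangent hx₀0 hx0
  -- hence log(κ Γ x) ≥ (x-1) * digamma x₀
  have hkey : (x - 1) * digamma x₀ ≤ Real.log (κ * Real.Gamma x) := by
    have h0 : Real.log κ + Real.log (Real.Gamma x₀) = (x₀ - 1) * digamma x₀ := by
      rw [hlog0] at hzero; linarith
    rw [hlog1]; nlinarith [htan]
  -- main exponent inequality
  have hexp : Real.log (κ * Real.Gamma x₀) * (1 / (x₀ - 1)) ≤ Real.log (κ * Real.Gamma x) * α := by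
    have h1 : Real.log (κ * Real.Gamma x₀) * (1 / (x₀ - 1)) = digamma x₀ := by
      have : Real.log (κ * Real.Gamma x₀) = (x₀ - 1) * digamma x₀ := by linarith
      rw [this]; field_simp
    have h2 : digamma x₀ ≤ Real.log (κ * Real.Gamma x) * α :=
      calc digamma x₀ = α * (x - 1) * digamma x₀ := by rw [hαx]; ring
        _ = (x - 1) * digamma x₀ * α := by ring
        _ ≤ Real.log (κ * Real.Gamma x) * α := mul_le_mul_of_nonneg_right hkey hα.le
    linarith
  -- convert rpow
  have hr0 : (κ * Real.Gamma (1 / (1 / (x₀ - 1)) + 1)) ^ (1 / (x₀ - 1))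
      = Real.exp (Real.log (κ * Real.Gamma x₀) * (1 / (x₀ - 1))) := by
    rw [hxe, Real.rpow_def_of_pos hB0]
  have hr1 : (κ * Real.Gamma (1 / α + 1)) ^ α
      = Real.exp (Real.log (κ * Real.Gamma x) * α) := by
    rw [Real.rpow_def_of_pos hB1]
  rw [hr0, hr1]
  have := Real.exp_le_exp.2 hexp
  have h2 : Real.exp (-Real.exp (Real.log (κ * Real.Gamma x) * α))
      ≤ Real.exp (-Real.exp (Real.log (κ * Real.Gamma x₀) * (1 / (x₀ - 1)))) :=
    Real.exp_le_exp.2 (by linarith)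
  linarith
end

section
/- For κ = 1, the infimum over α ∈ (0,∞) of g_1(α) = 1 - exp(-(Γ(1/α + 1))^α) equals the limit as α → +∞, namely 1 - exp(-e^{-γ}), where γ is Euler's constant. -/
open Real Filter

theorem g_one_inf (γ : ℝ) (hγ : γ = Real.eulerMascheroniConstant) :
    IsGLB ((fun α => 1 - Real.exp (-(Real.Gamma (1 / α + 1)) ^ α)) '' Set.Ioi 0)
      (1 - Real.exp (-Real.exp (-γ))) ∧
    Tendsto (fun α => 1 - Real.exp (-(Real.Gamma (1 / α + 1)) ^ α)) atTop
      (nhds (1 - Real.exp (-Real.exp (-γ)))) := by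
  subst hγ
  set γ := Real.eulerMascheroniConstant with hγ
  set s : ℝ → ℝ := fun x => Real.log (Real.Gamma (1 + x)) / x with hs
  -- s is monotone on (0, ∞)
  have hmono : ∀ x y : ℝ, 0 < x → x ≤ y → s x ≤ s y := by
    intro x y hx hxy
    have hc := Real.convexOn_log_Gamma
    have h := hc.secant_mono (a := 1) (x := 1 + x) (y := 1 + y)
      (by norm_num) (by simp [Set.mem_Ioi]; linarith) (by simp [Set.mem_Ioi]; linarith)
      (by intro h; nlinarith) (by intro h; nlinarith) (by linarith)
    simpa [hs, Real.Gamma_one, Function.comp] using h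
  -- s tends to -γ at 0⁺
  have hslope : Tendsto s (nhdsWithin 0 (Set.Ioi 0)) (nhds (-γ)) := by
    have hd : HasDerivAt (fun x : ℝ => Real.log (Real.Gamma x)) (-γ) 1 := by
      have := Real.hasDerivAt_Gamma_one
      have h2 := this.log (by simp [Real.Gamma_one])
      simpa [Real.Gamma_one] using h2
    have ht := hasDerivAt_iff_tendsto_slope.mp hd
    have hcomp : Tendsto (fun x : ℝ => 1 + x) (nhdsWithin 0 (Set.Ioi 0))
        (nhdsWithin 1 {x : ℝ | x ≠ 1}) := by
      apply tendsto_nhdsWithin_of_tendsto_nhds_of_eventually_within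
      · have : Tendsto (fun x : ℝ => 1 + x) (nhds 0) (nhds (1 + 0)) :=
          (continuous_const.add continuous_id).tendsto 0
        simpa using this.mono_left nhdsWithin_le_nhds
      · filter_upwards [self_mem_nhdsWithin] with x hx
        intro h
        have : x = 0 := by linarith
        exact absurd this (ne_of_gt hx)
    refine (ht.comp hcomp).congr fun x => ?_
    simp [Function.comp, slope_def_field, Real.Gamma_one, hs]
  -- s x ≥ -γ for x > 0
  have hlb : ∀ x : ℝ, 0 < x → -γ ≤ s x := by
    intro x hx
    refine le_of_tendsto hslope ?_
    filter_upwards [self_mem_nhdsWithin,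
      eventually_nhdsWithin_of_eventually_nhds (eventually_lt_nhds hx)] with y hy hyx
    exact hmono y x hy hyx.le
  -- rewrite g
  have hg : ∀ α : ℝ, 0 < α →
      1 - Real.exp (-(Real.Gamma (1 / α + 1)) ^ α) = 1 - Real.exp (-Real.exp (s (1 / α))) := by
    intro α hα
    have h1 : (0:ℝ) < 1 / α := by positivity
    have hΓ : 0 < Real.Gamma (1 / α + 1) := Real.Gamma_pos_of_pos (by linarith)
    rw [Real.rpow_def_of_pos hΓ]
    have : s (1 / α) = Real.log (Real.Gamma (1 + 1 / α)) / (1 / α) := rfl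
    rw [this, div_div_eq_mul_div, div_one, add_comm, mul_comm]
  have hcont : Continuous (fun t : ℝ => 1 - Real.exp (-Real.exp t)) := by
    continuity
  -- the limit
  have hlim : Tendsto (fun α => 1 - Real.exp (-(Real.Gamma (1 / α + 1)) ^ α)) atTop
      (nhds (1 - Real.exp (-Real.exp (-γ)))) := by
    have h1 : Tendsto (fun α : ℝ => 1 / α) atTop (nhdsWithin 0 (Set.Ioi 0)) := by
      apply tendsto_nhdsWithin_of_tendsto_nhds_of_eventually_within
      · exact tendsto_inv_atTop_zero.congr fun x => (one_div x).symm
      · filter_upwards [eventually_gt_atTop (0:ℝ)] with α hα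
        exact Set.mem_Ioi.mpr (by positivity)
    have h2 : Tendsto (fun α : ℝ => s (1 / α)) atTop (nhds (-γ)) := hslope.comp h1
    have h3 := (hcont.tendsto _).comp h2
    apply h3.congr'
    filter_upwards [eventually_gt_atTop 0] with α hα
    exact (hg α hα).symm
  refine ⟨⟨?_, ?_⟩, hlim⟩
  · rintro _ ⟨α, hα, rfl⟩
    show 1 - Real.exp (-Real.exp (-γ)) ≤ 1 - Real.exp (-(Real.Gamma (1 / α + 1)) ^ α)
    have hα0 : (0:ℝ) < α := hα
    rw [hg α hα0]
    have := hlb (1 / α) (by positivity)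
    have h := Real.exp_le_exp.mpr this
    have h2 : -Real.exp (s (1 / α)) ≤ -Real.exp (-γ) := by linarith
    have := Real.exp_le_exp.mpr h2
    linarith
  · intro b hb
    refine ge_of_tendsto hlim ?_
    filter_upwards [eventually_gt_atTop 0] with α hα
    exact hb ⟨α, hα, rfl⟩
end

section
/- For 0 < κ < 1, the infimum over α ∈ (0,∞) of g_κ(α) = 1 - exp(-(κ·Γ(1/α + 1))^α) is 0, attained in the limit α → +∞. -/
open Real Filter

theorem g_inf_zero_of_kappa_lt_one (κ : ℝ) (hκ0 : 0 < κ) (hκ1 : κ < 1) :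
    IsGLB ((fun α => 1 - Real.exp (-(κ * Real.Gamma (1 / α + 1)) ^ α)) '' Set.Ioi 0) 0 ∧
    Tendsto (fun α => 1 - Real.exp (-(κ * Real.Gamma (1 / α + 1)) ^ α)) atTop (nhds 0) := by
  have hΓ : Tendsto (fun α : ℝ => Real.Gamma (1 / α + 1)) atTop (nhds 1) := by
    have h1 : Tendsto (fun α : ℝ => 1 / α + 1) atTop (nhds 1) := by
      have := tendsto_inv_atTop_zero (𝕜 := ℝ)
      have h2 := this.add (tendsto_const_nhds (x := (1:ℝ)))
      simpa [one_div] using h2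
    have hc : ContinuousAt Real.Gamma 1 := by
      refine (Real.differentiableAt_Gamma (fun m => ?_)).continuousAt
      have : (0:ℝ) ≤ m := Nat.cast_nonneg m
      intro h; linarith
    simpa [Function.comp_def] using hc.tendsto.comp h1
  have hκΓ : Tendsto (fun α : ℝ => κ * Real.Gamma (1 / α + 1)) atTop (nhds κ) := by
    simpa using (tendsto_const_nhds (x := κ)).mul hΓ
  set c : ℝ := (κ + 1) / 2 with hc
  have hκc : κ < c := by rw [hc]; linarith
  have hc1 : c < 1 := by rw [hc]; linarith
  have hc0 : 0 < c := by rw [hc]; linarith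
  have hf : Tendsto (fun α : ℝ => (κ * Real.Gamma (1 / α + 1)) ^ α) atTop (nhds 0) := by
    have hub : Tendsto (fun α : ℝ => c ^ α) atTop (nhds 0) :=
      tendsto_rpow_atTop_of_base_lt_one c (by linarith) hc1
    have hev1 : ∀ᶠ α : ℝ in atTop, κ * Real.Gamma (1 / α + 1) < c :=
      hκΓ.eventually_lt_const hκc
    have hev2 : ∀ᶠ α : ℝ in atTop, 0 < κ * Real.Gamma (1 / α + 1) :=
      hκΓ.eventually_const_lt hκ0
    have hev3 : ∀ᶠ α : ℝ in atTop, (0:ℝ) ≤ α := eventually_ge_atTop 0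
    refine tendsto_of_tendsto_of_tendsto_of_le_of_le' tendsto_const_nhds hub ?_ ?_
    · filter_upwards [hev2] with α h2
      exact Real.rpow_nonneg h2.le α
    · filter_upwards [hev1, hev2, hev3] with α h1 h2 h3
      exact Real.rpow_le_rpow h2.le h1.le h3
  have htend : Tendsto (fun α : ℝ => 1 - Real.exp (-(κ * Real.Gamma (1 / α + 1)) ^ α))
      atTop (nhds 0) := by
    have hcont : Continuous fun x : ℝ => 1 - Real.exp (-x) :=
      continuous_const.sub (Real.continuous_exp.comp continuous_neg)
    have := (hcont.tendsto 0).comp hf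
    simpa [Function.comp_def] using this
  refine ⟨⟨?_, ?_⟩, htend⟩
  · rintro y ⟨α, hα, rfl⟩
    have hα' : (0:ℝ) < α := hα
    have hΓpos : 0 < Real.Gamma (1 / α + 1) :=
      Real.Gamma_pos_of_pos (by positivity)
    have hbase : 0 ≤ κ * Real.Gamma (1 / α + 1) := by positivity
    have hfnn : 0 ≤ (κ * Real.Gamma (1 / α + 1)) ^ α := Real.rpow_nonneg hbase α
    have : Real.exp (-(κ * Real.Gamma (1 / α + 1)) ^ α) ≤ 1 :=
      Real.exp_le_one_iff.mpr (by linarith)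
    simp only
    linarith
  · intro b hb
    refine ge_of_tendsto htend ?_
    filter_upwards [eventually_gt_atTop (0:ℝ)] with α hα
    exact hb ⟨α, hα, rfl⟩
end

section
/- For κ > 1, with x₀(κ) the unique zero in (0,1) of φ_κ(x) = 1 - 1/x - ln(x/κ), the function h_κ(x) = ln(x/κ)/(x-1) is strictly decreasing on (0, x₀(κ)) and strictly increasing on (x₀(κ), 1); hence min_{x ∈ (0,1)} h_κ(x) = h_κ(x₀(κ)). -/
open Real

theorem h_pareto_min_at_x0 (κ : ℝ) (hκ : 1 < κ) (x₀ : ℝ) (hx₀ : x₀ ∈ Set.Ioo (0:ℝ) 1)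
    (hzero : 1 - 1 / x₀ - Real.log (x₀ / κ) = 0) :
    StrictAntiOn (fun x => Real.log (x / κ) / (x - 1)) (Set.Ioc 0 x₀) ∧
    StrictMonoOn (fun x => Real.log (x / κ) / (x - 1)) (Set.Ico x₀ 1) ∧
    (∀ x ∈ Set.Ioo (0:ℝ) 1,
      Real.log (x₀ / κ) / (x₀ - 1) ≤ Real.log (x / κ) / (x - 1)) := by
  obtain ⟨hx₀0, hx₀1⟩ := hx₀
  have hκ0 : (0:ℝ) < κ := lt_trans one_pos hκ
  set h : ℝ → ℝ := fun x => Real.log (x / κ) / (x - 1) with hh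
  set φ : ℝ → ℝ := fun x => 1 - 1 / x - Real.log (x / κ) with hφ
  -- derivative of log(x/κ)
  have hlog : ∀ x ∈ Set.Ioo (0:ℝ) 1, HasDerivAt (fun x => Real.log (x / κ)) (1 / x) x := by
    intro x hx
    have hxκ : x / κ ≠ 0 := div_ne_zero (ne_of_gt hx.1) (ne_of_gt hκ0)
    have h1 : HasDerivAt (fun x : ℝ => x / κ) (1 / κ) x := by
      simpa using (hasDerivAt_id x).div_const κ
    have := (Real.hasDerivAt_log hxκ).comp x h1
    refine this.congr_deriv ?_
    have hx0 : x ≠ 0 := ne_of_gt hx.1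
    have hκ0' : κ ≠ 0 := ne_of_gt hκ0
    field_simp
  -- derivative of h
  have hderiv : ∀ x ∈ Set.Ioo (0:ℝ) 1, HasDerivAt h (φ x / (x - 1)^2) x := by
    intro x hx
    have hx1 : x - 1 ≠ 0 := by nlinarith [hx.2]
    have := ((hlog x hx).div ((hasDerivAt_id x).sub_const 1) hx1)
    refine this.congr_deriv ?_
    have hx0 : x ≠ 0 := ne_of_gt hx.1
    simp only [hφ, id]
    field_simp
  -- derivative of φ
  have hφderiv : ∀ x ∈ Set.Ioo (0:ℝ) 1, HasDerivAt φ (1 / x^2 - 1 / x) x := by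
    intro x hx
    have hx0 : x ≠ 0 := ne_of_gt hx.1
    have h1 : HasDerivAt (fun x : ℝ => 1 - 1 / x) (1 / x^2) x := by
      have hinv := hasDerivAt_inv hx0
      have h2 := hinv.const_sub 1
      have : (fun x : ℝ => 1 - 1/x) = fun x => 1 - x⁻¹ := by funext y; rw [one_div]
      rw [this]
      refine h2.congr_deriv ?_
      rw [neg_neg, one_div]
    exact h1.sub (hlog x hx)
  -- φ strictly monotone on Ioo 0 1
  have hφmono : StrictMonoOn φ (Set.Ioo 0 1) := by
    apply strictMonoOn_of_hasDerivWithinAt_pos (convex_Ioo 0 1)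
    · exact fun x hx => ((hφderiv x hx).continuousAt).continuousWithinAt
    · intro x hx
      rw [interior_Ioo] at hx
      exact ((hφderiv x hx).hasDerivWithinAt)
    · intro x hx
      rw [interior_Ioo] at hx
      have hx0 := hx.1
      have hx1 := hx.2
      have : 1 / x ^ 2 - 1 / x = (1 - x) / x ^ 2 := by field_simp
      rw [this]
      exact div_pos (by linarith) (by positivity)
  have hx₀mem : x₀ ∈ Set.Ioo (0:ℝ) 1 := ⟨hx₀0, hx₀1⟩
  have hφ0 : φ x₀ = 0 := hzero
  have hsub1 : Set.Ioc (0:ℝ) x₀ ⊆ Set.Ioo 0 1 := fun y hy => ⟨hy.1, lt_of_le_of_lt hy.2 hx₀1⟩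
  have hsub2 : Set.Ico x₀ (1:ℝ) ⊆ Set.Ioo 0 1 := fun y hy => ⟨lt_of_lt_of_le hx₀0 hy.1, hy.2⟩
  have hanti : StrictAntiOn h (Set.Ioc 0 x₀) := by
    apply strictAntiOn_of_hasDerivWithinAt_neg (convex_Ioc 0 x₀)
    · exact fun x hx => ((hderiv x (hsub1 hx)).continuousAt).continuousWithinAt
    · intro x hx
      rw [interior_Ioc] at hx
      exact (hderiv x (hsub1 (Set.Ioo_subset_Ioc_self hx))).hasDerivWithinAt
    · intro x hx
      rw [interior_Ioc] at hx
      have hxm : x ∈ Set.Ioo (0:ℝ) 1 := hsub1 (Set.Ioo_subset_Ioc_self hx)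
      have hφx : φ x < 0 := by
        have := hφmono hxm hx₀mem hx.2
        linarith [hφ0 ▸ this]
      have hden : (0:ℝ) < (x - 1)^2 := by
        have : x - 1 ≠ 0 := by nlinarith [hxm.2]
        positivity
      exact div_neg_of_neg_of_pos hφx hden
  have hmono : StrictMonoOn h (Set.Ico x₀ 1) := by
    apply strictMonoOn_of_hasDerivWithinAt_pos (convex_Ico x₀ 1)
    · exact fun x hx => ((hderiv x (hsub2 hx)).continuousAt).continuousWithinAt
    · intro x hx
      rw [interior_Ico] at hx
      exact (hderiv x (hsub2 (Set.Ioo_subset_Ico_self hx))).hasDerivWithinAt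
    · intro x hx
      rw [interior_Ico] at hx
      have hxm : x ∈ Set.Ioo (0:ℝ) 1 := hsub2 (Set.Ioo_subset_Ico_self hx)
      have hφx : 0 < φ x := by
        have := hφmono hx₀mem hxm hx.1
        linarith [hφ0 ▸ this]
      have hden : (0:ℝ) < (x - 1)^2 := by
        have : x - 1 ≠ 0 := by nlinarith [hxm.2]
        positivity
      exact div_pos hφx hden
  refine ⟨hanti, hmono, ?_⟩
  intro x hx
  rcases lt_trichotomy x x₀ with hlt | heq | hgt
  · exact le_of_lt (hanti ⟨hx.1, le_of_lt hlt⟩ ⟨hx₀0, le_refl _⟩ hlt)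
  · rw [heq]
  · exact le_of_lt (hmono ⟨le_refl _, hx₀1⟩ ⟨le_of_lt hgt, hx.2⟩ hgt)
end
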